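/- The set C(1/3) + S¹ has non-empty interior, where C(1/3) = C_{1/3} × C_{1/3} is the product of the middle-third Cantor set with itself and S¹ is the Euclidean unit circle in ℝ². -/

import Mathlib

open Pointwise

def cantorMT : Set ℝ :=
  {x | ∃ a : ℕ → ℕ, (∀ k, a k = 0 ∨ a k = 1) ∧
    x = (2 / 3) * ∑' k : ℕ, (a k : ℝ) / 3 ^ k}

noncomputable section CantorCircle
namespace CantorCircle

lemma summable_dig (a : ℕ → ℕ) (ha : ∀ k, a k ≤ 1) :
    Summable (fun k => (a k : ℝ) / 3 ^ k) := by
  apply Summable.of_nonneg_of_le (fun k => by positivity) (fun k => ?_)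
    (summable_geometric_of_lt_one (by norm_num) (by norm_num : (1:ℝ)/3 < 1))
  rw [one_div, inv_pow, ← one_div]
  gcongr
  exact_mod_cast ha k

lemma tsum_geo_tail (n : ℕ) : ∑' i : ℕ, ((1:ℝ)/3) ^ (i + n) = (3/2) * (1/3)^n := by
  have : ∀ i : ℕ, ((1:ℝ)/3) ^ (i + n) = ((1:ℝ)/3)^i * (1/3)^n := fun i => pow_add _ _ _
  simp_rw [this]
  rw [tsum_mul_right, tsum_geometric_of_lt_one (by norm_num) (by norm_num)]
  ring

lemma partial_bounds (a : ℕ → ℕ) (ha : ∀ k, a k ≤ 1) (n : ℕ) :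
    ∑ j ∈ Finset.range n, (a j : ℝ) / 3 ^ j ≤ (∑' k : ℕ, (a k : ℝ) / 3 ^ k) ∧
    (∑' k : ℕ, (a k : ℝ) / 3 ^ k) ≤ ∑ j ∈ Finset.range n, (a j : ℝ) / 3 ^ j + (3/2) * (1/3)^n := by
  have hs := summable_dig a ha
  have key := Summable.sum_add_tsum_nat_add (f := fun k => (a k : ℝ) / 3 ^ k) n hs
  have htail0 : 0 ≤ ∑' i : ℕ, (a (i + n) : ℝ) / 3 ^ (i + n) :=
    tsum_nonneg (fun i => by positivity)
  have hgs : Summable (fun i : ℕ => ((1:ℝ)/3) ^ (i + n)) :=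
    (summable_nat_add_iff (f := fun k : ℕ => ((1:ℝ)/3)^k) n).2
      (summable_geometric_of_lt_one (by norm_num) (by norm_num))
  have hs2 : Summable (fun i : ℕ => (a (i + n) : ℝ) / 3 ^ (i + n)) :=
    (summable_nat_add_iff (f := fun k : ℕ => (a k : ℝ) / 3 ^ k) n).2 hs
  have htail1 : (∑' i : ℕ, (a (i + n) : ℝ) / 3 ^ (i + n)) ≤ ∑' i : ℕ, ((1:ℝ)/3) ^ (i + n) := by
    refine Summable.tsum_le_tsum (fun i => ?_) hs2 hgs
    rw [one_div, inv_pow, ← one_div]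
    gcongr
    exact_mod_cast ha _
  rw [tsum_geo_tail] at htail1
  constructor <;> linarith [key]

lemma cantor_div3 {s : ℝ} (hs : s ∈ cantorMT) : s / 3 ∈ cantorMT := by
  obtain ⟨a, ha, rfl⟩ := hs
  have ha' : ∀ k, a k ≤ 1 := by
    intro k; rcases ha k with h | h <;> simp [h]
  refine ⟨fun k => if k = 0 then 0 else a (k-1), fun k => ?_, ?_⟩
  · rcases Nat.eq_zero_or_pos k with h | h
    · simp [h]
    · simp only [if_neg (Nat.pos_iff_ne_zero.1 h)]; exact ha (k-1)
  have hsum : Summable (fun k => (((if k = 0 then 0 else a (k-1)) : ℕ) : ℝ) / 3 ^ k) := by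
    apply summable_dig
    intro k
    rcases Nat.eq_zero_or_pos k with h | h
    · simp [h]
    · simp only [if_neg (Nat.pos_iff_ne_zero.1 h)]; exact ha' (k-1)
  rw [Summable.tsum_eq_zero_add hsum]
  have hb : ∀ b : ℕ, (((if b + 1 = 0 then 0 else a (b + 1 - 1)) : ℕ) : ℝ) / 3 ^ (b+1)
      = ((a b : ℝ) / 3 ^ b) * (1/3) := by
    intro b
    rw [if_neg (Nat.succ_ne_zero _), Nat.succ_sub_one, pow_succ]
    ring
  simp_rw [hb]
  rw [tsum_mul_right]
  norm_num
  ring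

def phi (z s : ℝ) : ℝ := (z - s/81)^2

noncomputable def st (x y : ℝ) : ℕ → (ℝ × ℝ) × ℕ × ℕ
  | 0 => ((0, 0), 0, 0)
  | k+1 =>
    if phi x ((st x y k).1.1 + (1/3)^(k+1)) + phi y ((st x y k).1.2 + (1/3)^(k+1))
        + (1/3)^(k+1)/200 ≤ 1 then
      (((st x y k).1.1, (st x y k).1.2), 0, 0)
    else if phi x ((st x y k).1.1 + (1/3)^(k+1)) + phi y ((st x y k).1.2 + 3*(1/3)^(k+1))
        + (1/3)^(k+1)/200 ≤ 1 then
      (((st x y k).1.1, (st x y k).1.2 + 2*(1/3)^(k+1)), 0, 1)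
    else if phi x ((st x y k).1.1 + 3*(1/3)^(k+1)) + phi y ((st x y k).1.2 + (1/3)^(k+1))
        + (1/3)^(k+1)/200 ≤ 1 then
      (((st x y k).1.1 + 2*(1/3)^(k+1), (st x y k).1.2), 1, 0)
    else
      (((st x y k).1.1 + 2*(1/3)^(k+1), (st x y k).1.2 + 2*(1/3)^(k+1)), 1, 1)

variable {x y : ℝ}

/-- key inequality for case 2 -/
lemma key2 (hx1 : 899/1000 ≤ x) (hy2 : y ≤ 461/1000)
    {u v h : ℝ} (hu1 : u ≤ 1) (hv0 : 0 ≤ v) (hh : 0 < h) :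
    phi x (u+h) + phi y (v+h) + h/200 ≤ phi x u + phi y (v+2*h) - h/200 := by
  have hb : 0 ≤ 2*(x-y)/81 + (2*v + 2*h - 2*u)/6561 - 1/100 := by linarith
  have he : phi x u + phi y (v+2*h) - h/200 - (phi x (u+h) + phi y (v+h) + h/200)
      = h * (2*(x-y)/81 + (2*v + 2*h - 2*u)/6561 - 1/100) := by
    unfold phi; ring
  nlinarith [mul_nonneg hh.le hb]

/-- key inequality for case 3 -/
lemma key3 (hx2 : x ≤ 901/1000) (hy1 : 459/1000 ≤ y)
    {u v h : ℝ} (hu0 : 0 ≤ u) (hv1 : v + h ≤ 1) (hh : 0 < h) :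
    phi x (u+h) + phi y (v+3*h) + h/200 ≤ phi x (u+2*h) + phi y v - h/200 := by
  have hb : 0 ≤ (6*y - 2*x)/81 + (2*u - 6*v - 6*h)/6561 - 1/100 := by linarith
  have he : phi x (u+2*h) + phi y v - h/200 - (phi x (u+h) + phi y (v+3*h) + h/200)
      = h * ((6*y - 2*x)/81 + (2*u - 6*v - 6*h)/6561 - 1/100) := by
    unfold phi; ring
  nlinarith [mul_nonneg hh.le hb]

/-- key inequality for case 4 -/
lemma key4 (hx1 : 899/1000 ≤ x) (hy2 : y ≤ 461/1000)
    {u v h : ℝ} (hu1 : u + h ≤ 1) (hv0 : 0 ≤ v) (hh : 0 < h) :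
    phi x (u+3*h) + phi y (v+h) + h/200 ≤ phi x (u+2*h) + phi y (v+2*h) - h/200 := by
  have hb : 0 ≤ 2*(x-y)/81 + (2*v - 2*u - 2*h)/6561 - 1/100 := by linarith
  have he : phi x (u+2*h) + phi y (v+2*h) - h/200 - (phi x (u+3*h) + phi y (v+h) + h/200)
      = h * (2*(x-y)/81 + (2*v - 2*u - 2*h)/6561 - 1/100) := by
    unfold phi; ring
  nlinarith [mul_nonneg hh.le hb]

lemma invariant (hx1 : 899/1000 ≤ x) (hx2 : x ≤ 901/1000)
    (hy1 : 459/1000 ≤ y) (hy2 : y ≤ 461/1000) : ∀ k : ℕ,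
    0 ≤ (st x y k).1.1 ∧ (st x y k).1.1 + (1/3)^k ≤ 1 ∧
    0 ≤ (st x y k).1.2 ∧ (st x y k).1.2 + (1/3)^k ≤ 1 ∧
    phi x ((st x y k).1.1 + (1/3)^k) + phi y ((st x y k).1.2 + (1/3)^k) + (1/3)^k/200 ≤ 1 ∧
    1 + (1/3)^k/200 ≤ phi x (st x y k).1.1 + phi y (st x y k).1.2 := by
  intro k
  induction k with
  | zero =>
    have h0 : st x y 0 = ((0,0),0,0) := rfl
    rw [h0]
    unfold phi
    norm_num
    refine ⟨?_, ?_⟩ <;>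
      nlinarith [sq_nonneg (x - 901/1000), sq_nonneg (y - 461/1000),
        sq_nonneg (x - 899/1000), sq_nonneg (y - 459/1000)]
  | succ k ih =>
    obtain ⟨hu0, hu1, hv0, hv1, hlow, hup⟩ := ih
    set u := (st x y k).1.1 with hudef
    set v := (st x y k).1.2 with hvdef
    have hpow : ((1:ℝ)/3)^k = 3 * (1/3)^(k+1) := by rw [pow_succ]; ring
    set h : ℝ := (1/3)^(k+1) with hdef
    have hh : 0 < h := by positivity
    rw [show st x y (k+1) =
      (if phi x (u + h) + phi y (v + h) + h/200 ≤ 1 then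
        ((u, v), 0, 0)
      else if phi x (u + h) + phi y (v + 3*h) + h/200 ≤ 1 then
        ((u, v + 2*h), 0, 1)
      else if phi x (u + 3*h) + phi y (v + h) + h/200 ≤ 1 then
        ((u + 2*h, v), 1, 0)
      else
        ((u + 2*h, v + 2*h), 1, 1)) from rfl]
    rw [hpow] at hu1 hv1 hlow hup
    split_ifs with h1 h2 h3
    · exact ⟨hu0, by simp only; linarith, hv0, by simp only; linarith,
        by simp only; linarith, by simp only; linarith⟩
    · refine ⟨hu0, by simp only; linarith, by simp only; linarith, by simp only; linarith, ?_, ?_⟩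
      · simp only
        have : v + 2*h + h = v + 3*h := by ring
        rw [this]; linarith
      · simp only
        have := key2 hx1 hy2 (u := u) (v := v) (h := h) (by linarith) hv0 hh
        linarith
    · refine ⟨by simp only; linarith, by simp only; linarith, hv0, by simp only; linarith, ?_, ?_⟩
      · simp only
        have : u + 2*h + h = u + 3*h := by ring
        rw [this]; linarith
      · simp only
        have := key3 hx2 hy1 (u := u) (v := v) (h := h) hu0 (by linarith) hh
        linarith
    · refine ⟨by simp only; linarith, by simp only; linarith, by simp only; linarith,
        by simp only; linarith, ?_, ?_⟩
      · simp only
        have e1 : u + 2*h + h = u + 3*h := by ring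
        have e2 : v + 2*h + h = v + 3*h := by ring
        rw [e1, e2]; linarith
      · simp only
        have := key4 hx1 hy2 (u := u) (v := v) (h := h) (by linarith) hv0 hh
        linarith


def aD (x y : ℝ) (k : ℕ) : ℕ := (st x y (k+1)).2.1
def bD (x y : ℝ) (k : ℕ) : ℕ := (st x y (k+1)).2.2

lemma st_succ (x y : ℝ) (k : ℕ) :
    (st x y (k+1)).1.1 = (st x y k).1.1 + 2*(aD x y k : ℝ)*(1/3)^(k+1) ∧
    (st x y (k+1)).1.2 = (st x y k).1.2 + 2*(bD x y k : ℝ)*(1/3)^(k+1) ∧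
    aD x y k ≤ 1 ∧ bD x y k ≤ 1 := by
  unfold aD bD
  set u := (st x y k).1.1
  set v := (st x y k).1.2
  set h : ℝ := (1/3)^(k+1)
  rw [show st x y (k+1) =
    (if phi x (u + h) + phi y (v + h) + h/200 ≤ 1 then
      ((u, v), 0, 0)
    else if phi x (u + h) + phi y (v + 3*h) + h/200 ≤ 1 then
      ((u, v + 2*h), 0, 1)
    else if phi x (u + 3*h) + phi y (v + h) + h/200 ≤ 1 then
      ((u + 2*h, v), 1, 0)
    else
      ((u + 2*h, v + 2*h), 1, 1)) from rfl]
  split_ifs <;> norm_num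

lemma u_eq (x y : ℝ) : ∀ n : ℕ,
    (st x y n).1.1 = (2/3) * ∑ j ∈ Finset.range n, (aD x y j : ℝ)/3^j ∧
    (st x y n).1.2 = (2/3) * ∑ j ∈ Finset.range n, (bD x y j : ℝ)/3^j := by
  intro n
  induction n with
  | zero => constructor <;> simp [show st x y 0 = ((0,0),0,0) from rfl]
  | succ k ih =>
    obtain ⟨ihu, ihv⟩ := ih
    obtain ⟨hu, hv, _, _⟩ := st_succ x y k
    have hp : ((1:ℝ)/3)^(k+1) = 1/3^(k+1) := one_div_pow _ _
    have hp2 : ((3:ℝ))^(k+1) = 3^k * 3 := pow_succ _ _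
    constructor
    · rw [Finset.sum_range_succ, hu, ihu, hp, hp2, mul_add]
      field_simp
    · rw [Finset.sum_range_succ, hv, ihv, hp, hp2, mul_add]
      field_simp

def sA (x y : ℝ) : ℝ := (2/3) * ∑' k : ℕ, (aD x y k : ℝ)/3^k
def sB (x y : ℝ) : ℝ := (2/3) * ∑' k : ℕ, (bD x y k : ℝ)/3^k

lemma sA_mem (x y : ℝ) : sA x y ∈ cantorMT :=
  ⟨aD x y, fun k => Nat.le_one_iff_eq_zero_or_eq_one.1 (st_succ x y k).2.2.1, rfl⟩

lemma sB_mem (x y : ℝ) : sB x y ∈ cantorMT :=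
  ⟨bD x y, fun k => Nat.le_one_iff_eq_zero_or_eq_one.1 (st_succ x y k).2.2.2, rfl⟩

lemma sA_bounds (x y : ℝ) (n : ℕ) :
    (st x y n).1.1 ≤ sA x y ∧ sA x y ≤ (st x y n).1.1 + (1/3)^n ∧
    (st x y n).1.2 ≤ sB x y ∧ sB x y ≤ (st x y n).1.2 + (1/3)^n := by
  obtain ⟨hu, hv⟩ := u_eq x y n
  have hA := partial_bounds (aD x y) (fun k => (st_succ x y k).2.2.1) n
  have hB := partial_bounds (bD x y) (fun k => (st_succ x y k).2.2.2) n
  unfold sA sB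
  rw [hu, hv]
  refine ⟨by linarith [hA.1], by linarith [hA.2], by linarith [hB.1], by linarith [hB.2]⟩

lemma phi_squeeze {z α β : ℝ} (h0 : 0 ≤ α) (hab : α ≤ β) (hb1 : β ≤ 1)
    (hz1 : 2/5 ≤ z) (hz2 : z ≤ 1) :
    phi z β ≤ phi z α ∧ phi z α ≤ phi z β + (β - α) := by
  unfold phi
  constructor <;> nlinarith

set_option maxHeartbeats 2000000 in
lemma exists_pair {x y : ℝ} (hx1 : 899/1000 ≤ x) (hx2 : x ≤ 901/1000)
    (hy1 : 459/1000 ≤ y) (hy2 : y ≤ 461/1000) :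
    ∃ s t : ℝ, s ∈ cantorMT ∧ t ∈ cantorMT ∧ (x - s/81)^2 + (y - t/81)^2 = 1 := by
  refine ⟨sA x y, sB x y, sA_mem x y, sB_mem x y, ?_⟩
  have key : ∀ n : ℕ, |phi x (sA x y) + phi y (sB x y) - 1| ≤ 2 * (1/3)^n := by
    intro n
    obtain ⟨hu0, hu1, hv0, hv1, hlow, hup⟩ := invariant hx1 hx2 hy1 hy2 n
    obtain ⟨hsu, hsu', hsv, hsv'⟩ := sA_bounds x y n
    set u := (st x y n).1.1
    set v := (st x y n).1.2
    set e : ℝ := (1/3)^n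
    have hxz1 : (2:ℝ)/5 ≤ x := by linarith
    have hxz2 : x ≤ 1 := by linarith
    have hyz1 : (2:ℝ)/5 ≤ y := by linarith
    have hyz2 : y ≤ 1 := by linarith
    -- phi x (sA) between phi x (u+e) and phi x u
    have h1 := phi_squeeze (z := x) (α := sA x y) (β := u + e)
      (by linarith) (by linarith) (by linarith) hxz1 hxz2
    have h2 := phi_squeeze (z := x) (α := u) (β := sA x y)
      (by linarith) (by linarith) (by linarith) hxz1 hxz2
    have h3 := phi_squeeze (z := y) (α := sB x y) (β := v + e)
      (by linarith) (by linarith) (by linarith) hyz1 hyz2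
    have h4 := phi_squeeze (z := y) (α := v) (β := sB x y)
      (by linarith) (by linarith) (by linarith) hyz1 hyz2
    -- also bound phi x u against phi x (u+e)
    have h5 := phi_squeeze (z := x) (α := u) (β := u + e)
      (by linarith) (by linarith) (by linarith) hxz1 hxz2
    have h6 := phi_squeeze (z := y) (α := v) (β := v + e)
      (by linarith) (by linarith) (by linarith) hyz1 hyz2
    rw [abs_le]
    have he : 0 ≤ e := by positivity
    constructor
    · -- lower: phi sums ≥ 1 - 2e
      nlinarith [h1.1, h3.1, h5.2, h6.2]
    · nlinarith [h2.1, h4.1, h5.2, h6.2]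
  have habs : |phi x (sA x y) + phi y (sB x y) - 1| ≤ 0 := by
    by_contra hcon
    push_neg at hcon
    obtain ⟨n, hn⟩ := exists_pow_lt_of_lt_one
      (show 0 < |phi x (sA x y) + phi y (sB x y) - 1| / 2 by linarith)
      (show (1:ℝ)/3 < 1 by norm_num)
    have := key n
    linarith
  have : phi x (sA x y) + phi y (sB x y) = 1 := by
    have := abs_nonpos_iff.1 habs
    linarith [sub_eq_zero.1 this]
  unfold phi at this
  linarith [this]


lemma mem_cantor_div81 {s : ℝ} (hs : s ∈ cantorMT) : s/81 ∈ cantorMT := by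
  have h3 := cantor_div3 (cantor_div3 (cantor_div3 (cantor_div3 hs)))
  have : s/3/3/3/3 = s/81 := by ring
  rwa [this] at h3

end CantorCircle

open CantorCircle in
theorem stmt_16 :
    (interior ({p : EuclideanSpace ℝ (Fin 2) | p 0 ∈ cantorMT ∧ p 1 ∈ cantorMT} +
      Metric.sphere (0 : EuclideanSpace ℝ (Fin 2)) 1)).Nonempty := by
  classical
  set U : Set (EuclideanSpace ℝ (Fin 2)) :=
    {p | p 0 ∈ Set.Ioo (899/1000 : ℝ) (901/1000) ∧ p 1 ∈ Set.Ioo (459/1000 : ℝ) (461/1000)}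
    with hU
  have hc0 : Continuous (fun p : EuclideanSpace ℝ (Fin 2) => p 0) :=
    (EuclideanSpace.proj (0 : Fin 2)).continuous
  have hc1 : Continuous (fun p : EuclideanSpace ℝ (Fin 2) => p 1) :=
    (EuclideanSpace.proj (1 : Fin 2)).continuous
  have hUopen : IsOpen U := by
    have : U = (fun p : EuclideanSpace ℝ (Fin 2) => p 0) ⁻¹' (Set.Ioo (899/1000) (901/1000)) ∩
        (fun p : EuclideanSpace ℝ (Fin 2) => p 1) ⁻¹' (Set.Ioo (459/1000) (461/1000)) := rfl
    rw [this]
    exact (isOpen_Ioo.preimage hc0).inter (isOpen_Ioo.preimage hc1)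
  have hUne : U.Nonempty := by
    refine ⟨(WithLp.equiv 2 (Fin 2 → ℝ)).symm ![9/10, 23/50], ?_, ?_⟩ <;>
      · simp only [WithLp.equiv_symm_apply, PiLp.toLp_apply, Matrix.cons_val_zero, Matrix.cons_val_one,
          Matrix.head_cons, Set.mem_Ioo]
        norm_num
  have hUsub : U ⊆ {p : EuclideanSpace ℝ (Fin 2) | p 0 ∈ cantorMT ∧ p 1 ∈ cantorMT} +
      Metric.sphere (0 : EuclideanSpace ℝ (Fin 2)) 1 := by
    rintro p ⟨⟨hx1, hx2⟩, hy1, hy2⟩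
    obtain ⟨s, t, hs, ht, heq⟩ := exists_pair (x := p 0) (y := p 1)
      (le_of_lt hx1) (le_of_lt hx2) (le_of_lt hy1) (le_of_lt hy2)
    rw [Set.mem_add]
    refine ⟨(WithLp.equiv 2 (Fin 2 → ℝ)).symm ![s/81, t/81], ?_,
      p - (WithLp.equiv 2 (Fin 2 → ℝ)).symm ![s/81, t/81], ?_, by abel⟩
    · constructor
      · simpa only [WithLp.equiv_symm_apply, PiLp.toLp_apply, Matrix.cons_val_zero] using mem_cantor_div81 hs
      · simpa only [WithLp.equiv_symm_apply, PiLp.toLp_apply, Matrix.cons_val_one, Matrix.head_cons, Matrix.cons_val_zero] using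
          mem_cantor_div81 ht
    · rw [mem_sphere_zero_iff_norm, EuclideanSpace.norm_eq]
      rw [Fin.sum_univ_two]
      simp only [PiLp.sub_apply, WithLp.equiv_symm_apply, PiLp.toLp_apply, Matrix.cons_val_zero,
        Matrix.cons_val_one, Matrix.head_cons, Real.norm_eq_abs, sq_abs]
      rw [heq, Real.sqrt_one]
  exact hUne.mono (interior_maximal hUsub hUopen)
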